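/- For every θ ∈ (0, π) and all real ψ₁, ψ₂, the quantity sin θ (sin ψ₁ + sin ψ₂) + cos ψ₁ − cos ψ₂ is at most 2√(1 + sin²θ). Consequently the CHSH success probability P(θ, ψ₁, ψ₂) = 1/2 + (1/8)(sin θ (sin ψ₁ + sin ψ₂) + cos ψ₁ − cos ψ₂) satisfies P(θ, ψ₁, ψ₂) ≤ 1/2 + √(1 + sin²θ)/4 for all ψ₁, ψ₂. -/
import Mathlib

lemma aux_bound (a b ψ : ℝ) : a * Real.sin ψ + b * Real.cos ψ ≤ Real.sqrt (a ^ 2 + b ^ 2) := by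
  have h : (a * Real.sin ψ + b * Real.cos ψ) ^ 2 ≤ a ^ 2 + b ^ 2 := by
    have hs := Real.sin_sq_add_cos_sq ψ
    nlinarith [sq_nonneg (a * Real.cos ψ - b * Real.sin ψ)]
  calc a * Real.sin ψ + b * Real.cos ψ ≤ |a * Real.sin ψ + b * Real.cos ψ| := le_abs_self _
    _ = Real.sqrt ((a * Real.sin ψ + b * Real.cos ψ) ^ 2) := (Real.sqrt_sq_eq_abs _).symm
    _ ≤ Real.sqrt (a ^ 2 + b ^ 2) := Real.sqrt_le_sqrt h

theorem stmt_1 (θ : ℝ) (hθ : θ ∈ Set.Ioo 0 Real.pi) :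
    (∀ ψ₁ ψ₂ : ℝ,
      Real.sin θ * (Real.sin ψ₁ + Real.sin ψ₂) + Real.cos ψ₁ - Real.cos ψ₂ ≤
        2 * Real.sqrt (1 + Real.sin θ ^ 2)) ∧
    (∀ ψ₁ ψ₂ : ℝ,
      1 / 2 + (1 / 8) * (Real.sin θ * (Real.sin ψ₁ + Real.sin ψ₂)
          + Real.cos ψ₁ - Real.cos ψ₂) ≤
        1 / 2 + Real.sqrt (1 + Real.sin θ ^ 2) / 4) := by
  have key : ∀ ψ₁ ψ₂ : ℝ,
      Real.sin θ * (Real.sin ψ₁ + Real.sin ψ₂) + Real.cos ψ₁ - Real.cos ψ₂ ≤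
        2 * Real.sqrt (1 + Real.sin θ ^ 2) := by
    intro ψ₁ ψ₂
    have h1 := aux_bound (Real.sin θ) 1 ψ₁
    have h2 := aux_bound (Real.sin θ) (-1) ψ₂
    have he : Real.sin θ ^ 2 + (1:ℝ) ^ 2 = 1 + Real.sin θ ^ 2 := by ring
    have he2 : Real.sin θ ^ 2 + (-1:ℝ) ^ 2 = 1 + Real.sin θ ^ 2 := by ring
    rw [he] at h1
    rw [he2] at h2
    linarith
  refine ⟨key, fun ψ₁ ψ₂ => ?_⟩
  have := key ψ₁ ψ₂
  linarith
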